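/- Let ρ : Z → ℝ^p be measurable with E[y·φ ∣ 𝔪] = ρ ∘ z almost surely, and define θ0(z') := Σ0(z')⁻¹·ρ(z'). Then the doubly robust moment is universally Neyman orthogonal with respect to the nuisances (θ, Σ⁻¹): almost surely, (i) E[I_p − Σ0(z)⁻¹·φ φᵀ ∣ 𝔪] = 0 (the conditional expectation of the derivative of the doubly robust moment in the θ direction vanishes at the true nuisances), and (ii) E[φ·(y − ⟨θ0(z), φ⟩) ∣ 𝔪] = 0 (the conditional expectation of the derivative in the Σ⁻¹ direction vanishes at the true nuisances). -/

import Mathlib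

open MeasureTheory Matrix ENNReal

lemma measurable_det' {Z : Type*} [MeasurableSpace Z] {p : ℕ}
    (M : Z → Matrix (Fin p) (Fin p) ℝ) (h : ∀ i j, Measurable fun z' => M z' i j) :
    Measurable fun z' => (M z').det := by
  simp_rw [Matrix.det_apply, Units.smul_def, zsmul_eq_mul]
  exact Finset.measurable_sum _ fun σ _ =>
    measurable_const.mul (Finset.measurable_prod _ fun i _ => h _ _)

lemma measurable_inv_entry {Z : Type*} [MeasurableSpace Z] {p : ℕ}
    (M : Z → Matrix (Fin p) (Fin p) ℝ) (h : ∀ i j, Measurable fun z' => M z' i j)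
    (i j : Fin p) : Measurable fun z' => (M z')⁻¹ i j := by
  simp_rw [Matrix.inv_def, Matrix.smul_apply, Ring.inverse_eq_inv', smul_eq_mul,
    Matrix.adjugate_apply]
  refine ((measurable_det' M h).inv).mul (measurable_det' _ fun k l => ?_)
  simp_rw [Matrix.updateRow_apply]
  by_cases hk : k = j <;> simp [hk]
  exact h _ _

set_option maxHeartbeats 1000000 in
lemma condexp_vanish_aux {Ω : Type*} {m0 : MeasurableSpace Ω} (μ : Measure Ω)
    [IsProbabilityMeasure μ] {m : MeasurableSpace Ω} (hm : m ≤ m0) {p : ℕ}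
    (G H : Ω → ℝ) (f g h : Fin p → Ω → ℝ)
    (hG : Integrable G μ) (hGH : μ[G|m] =ᵐ[μ] H)
    (hf : ∀ k, StronglyMeasurable[m] (f k))
    (hg : ∀ k, Integrable (g k) μ)
    (hgh : ∀ k, μ[g k|m] =ᵐ[μ] h k)
    (hsum : ∀ᵐ ω ∂μ, H ω = ∑ k, f k ω * h k ω) :
    μ[fun ω => G ω - ∑ k, f k ω * g k ω | m] =ᵐ[μ] 0 := by
  by_cases hF : Integrable (fun ω => G ω - ∑ k, f k ω * g k ω) μ
  swap
  · rw [condExp_of_not_integrable hF]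
  set F : Ω → ℝ := fun ω => G ω - ∑ k, f k ω * g k ω with hFdef
  -- sets where the f's are bounded
  set s : ℕ → Set Ω := fun N => {ω | ∀ k, |f k ω| ≤ N} with hsdef
  have hsm : ∀ N, MeasurableSet[m] (s N) := by
    intro N
    have : s N = ⋂ k, (fun ω => |f k ω|) ⁻¹' Set.Iic (N : ℝ) := by
      ext ω; simp [hsdef]
    rw [this]
    exact MeasurableSet.iInter fun k => ((hf k).measurable.abs) measurableSet_Iic
  have hsuniv : ∀ ω, ∃ N, ω ∈ s N := by
    intro ω
    obtain ⟨N, hN⟩ := exists_nat_ge (∑ k, |f k ω|)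
    exact ⟨N, fun k => le_trans (Finset.single_le_sum (f := fun k => |f k ω|)
      (fun k _ => abs_nonneg _) (Finset.mem_univ k)) hN⟩
  have key : ∀ N : ℕ, ∀ᵐ ω ∂(μ.restrict (s N)), (μ[F|m]) ω = 0 := by
    intro N
    have hsm0 : MeasurableSet[m0] (s N) := hm _ (hsm N)
    have h1 : μ[F|m] =ᵐ[μ.restrict (s N)] (μ.restrict (s N))[F|m] :=
      (condExp_restrict_ae_eq_restrict hm (hsm N) hF).symm
    have hgν : ∀ k, Integrable (g k) (μ.restrict (s N)) := fun k => (hg k).restrict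
    have hbound : ∀ k, ∀ᵐ ω ∂(μ.restrict (s N)), ‖f k ω‖ ≤ (N : ℝ) := by
      intro k
      rw [ae_restrict_iff' hsm0]
      exact Filter.Eventually.of_forall fun ω hω => by
        simpa [Real.norm_eq_abs] using hω k
    have hterm : ∀ k, Integrable (fun ω => f k ω * g k ω) (μ.restrict (s N)) := fun k =>
      Integrable.bdd_mul (hgν k) ((hf k).mono hm).aestronglyMeasurable (hbound k)
    have h2 : (μ.restrict (s N))[F|m] =ᵐ[μ.restrict (s N)]
        fun ω => H ω - ∑ k, f k ω * h k ω := by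
      have hSumInt : Integrable (fun ω => ∑ k, f k ω * g k ω) (μ.restrict (s N)) :=
        integrable_finset_sum _ fun k _ => hterm k
      have e1 : (μ.restrict (s N))[F|m] =ᵐ[μ.restrict (s N)]
          (μ.restrict (s N))[G|m] - (μ.restrict (s N))[fun ω => ∑ k, f k ω * g k ω|m] :=
        condExp_sub hG.restrict hSumInt m
      have hfuneq : (∑ k : Fin p, fun ω' => f k ω' * g k ω')
          = fun ω => ∑ k, f k ω * g k ω := by
        funext ω; simp
      have e2 : (μ.restrict (s N))[fun ω => ∑ k, f k ω * g k ω|m]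
          =ᵐ[μ.restrict (s N)]
          ∑ k, (μ.restrict (s N))[fun ω' => f k ω' * g k ω'|m] := by
        rw [← hfuneq]
        exact condExp_finsetSum (f := fun k ω' => f k ω' * g k ω') (fun k _ => hterm k) m
      have e3 : ∀ k, (μ.restrict (s N))[fun ω' => f k ω' * g k ω'|m]
          =ᵐ[μ.restrict (s N)] fun ω => f k ω * h k ω := by
        intro k
        refine (condExp_mul_of_stronglyMeasurable_left (hf k) (hterm k) (hgν k)).trans ?_
        have hk : (μ.restrict (s N))[g k|m] =ᵐ[μ.restrict (s N)] h k :=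
          (condExp_restrict_ae_eq_restrict hm (hsm N) (hg k)).trans
            (ae_restrict_of_ae (hgh k))
        filter_upwards [hk] with ω hω
        simp only [Pi.mul_apply, hω]
      have e4 : (μ.restrict (s N))[G|m] =ᵐ[μ.restrict (s N)] H :=
        (condExp_restrict_ae_eq_restrict hm (hsm N) hG).trans (ae_restrict_of_ae hGH)
      have e5 : ∀ᵐ ω ∂(μ.restrict (s N)),
          ∀ k, ((μ.restrict (s N))[fun ω' => f k ω' * g k ω'|m]) ω = f k ω * h k ω :=
        ae_all_iff.mpr fun k => e3 k
      filter_upwards [e1, e2, e4, e5] with ω h1ω h2ω h4ω h5ω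
      rw [h1ω]
      simp only [Pi.sub_apply, h2ω, h4ω, Finset.sum_apply]
      exact congrArg _ (Finset.sum_congr rfl fun k _ => h5ω k)
    refine (h1.trans h2).trans ?_
    filter_upwards [ae_restrict_of_ae hsum] with ω hω
    simp [hω]
  -- combine over N
  have hnull : ∀ N : ℕ, μ ({ω | ¬ (μ[F|m]) ω = 0} ∩ s N) = 0 := by
    intro N
    have := (ae_iff).mp (key N)
    rwa [Measure.restrict_apply' (hm _ (hsm N))] at this
  refine (ae_iff).mpr (measure_mono_null (fun ω hω => ?_) (measure_iUnion_null hnull))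
  obtain ⟨N, hN⟩ := hsuniv ω
  exact Set.mem_iUnion.mpr ⟨N, hω, hN⟩

/-- Universal Neyman orthogonality of the doubly robust moment:
at the true nuisances `(θ0, Σ0⁻¹)`, the conditional expectations of the
derivatives in the `θ` direction and in the `Σ⁻¹` direction vanish. -/
theorem doubly_robust_universal_orthogonality
    {Ω Z A : Type*} [MeasurableSpace Ω] [MeasurableSpace Z] [MeasurableSpace A]
    (μ : Measure Ω) [IsProbabilityMeasure μ]
    (z : Ω → Z) (a : Ω → A) (y : Ω → ℝ)
    (hz : Measurable z) (ha : Measurable a) (hy : Measurable y)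
    (p : ℕ) (hp : 0 < p)
    (φ : A → Z → Fin p → ℝ)
    (hφ : Measurable fun q : A × Z => φ q.1 q.2)
    (hφ2 : ∀ i, MemLp (fun ω => φ (a ω) (z ω) i) 2 μ)
    (hyφ : ∀ i, Integrable (fun ω => y ω * φ (a ω) (z ω) i) μ)
    (S0 : Z → Matrix (Fin p) (Fin p) ℝ)
    (hS0meas : ∀ i j, Measurable fun z' => S0 z' i j)
    (hS0 : ∀ i j, μ[fun ω => φ (a ω) (z ω) i * φ (a ω) (z ω) j |
        MeasurableSpace.comap z inferInstance] =ᵐ[μ] fun ω => S0 (z ω) i j)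
    (hS0inv : ∀ᵐ ω ∂μ, IsUnit (S0 (z ω)))
    -- cross moment of outcome and features
    (ρ : Z → Fin p → ℝ) (hρmeas : Measurable ρ)
    (hρ : ∀ i, μ[fun ω => y ω * φ (a ω) (z ω) i |
        MeasurableSpace.comap z inferInstance] =ᵐ[μ] fun ω => ρ (z ω) i)
    -- the projection coefficient θ0(z) := Σ0(z)⁻¹ ρ(z)
    (θ0 : Z → Fin p → ℝ) (hθ0def : ∀ z', θ0 z' = (S0 z')⁻¹ *ᵥ ρ z') :
    -- (i) derivative in the θ direction has vanishing conditional expectation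
    (∀ i j, μ[fun ω => (1 : Matrix (Fin p) (Fin p) ℝ) i j
          - ((S0 (z ω))⁻¹ *ᵥ φ (a ω) (z ω)) i * φ (a ω) (z ω) j |
        MeasurableSpace.comap z inferInstance] =ᵐ[μ] 0) ∧
    -- (ii) derivative in the Σ⁻¹ direction has vanishing conditional expectation
    (∀ i, μ[fun ω => φ (a ω) (z ω) i * (y ω - θ0 (z ω) ⬝ᵥ φ (a ω) (z ω)) |
        MeasurableSpace.comap z inferInstance] =ᵐ[μ] 0) := by
  set m : MeasurableSpace Ω := MeasurableSpace.comap z inferInstance with hmdef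
  have hm : m ≤ _ := hz.comap_le
  have hzm : Measurable[m] z := fun t ht => ⟨t, ht, rfl⟩
  -- products of features are integrable
  have hgint : ∀ i j, Integrable (fun ω => φ (a ω) (z ω) i * φ (a ω) (z ω) j) μ := by
    intro i j
    have hpq : (1 : ℝ≥0∞) / 1 = 1 / 2 + 1 / 2 := by
      rw [div_one]; exact (ENNReal.add_halves 1).symm
    have h1 : MemLp ((fun ω => φ (a ω) (z ω) i) • (fun ω => φ (a ω) (z ω) j)) 1 μ :=
      MemLp.smul (hφ2 j) (hφ2 i) (hpqr := ⟨by rw [inv_one]; exact ENNReal.inv_two_add_inv_two⟩)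
    have := memLp_one_iff_integrable.mp h1
    exact this
  -- strongly measurable nuisance entries
  have hfSM : ∀ i k, StronglyMeasurable[m] fun ω => (S0 (z ω))⁻¹ i k := fun i k =>
    Measurable.stronglyMeasurable ((measurable_inv_entry S0 hS0meas i k).comp hzm)
  have hθ0m : ∀ k, Measurable fun z' => θ0 z' k := by
    intro k
    simp_rw [hθ0def, Matrix.mulVec, dotProduct]
    exact Finset.measurable_sum _ fun k' _ =>
      (measurable_inv_entry S0 hS0meas k k').mul ((measurable_pi_apply k').comp hρmeas)
  have hθSM : ∀ k, StronglyMeasurable[m] fun ω => θ0 (z ω) k := fun k =>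
    Measurable.stronglyMeasurable ((hθ0m k).comp hzm)
  constructor
  · -- part (i)
    intro i j
    have heq : (fun ω => (1 : Matrix (Fin p) (Fin p) ℝ) i j
          - ((S0 (z ω))⁻¹ *ᵥ φ (a ω) (z ω)) i * φ (a ω) (z ω) j)
        = fun ω => (fun _ : Ω => (1 : Matrix (Fin p) (Fin p) ℝ) i j) ω
          - ∑ k, (fun k (ω : Ω) => (S0 (z ω))⁻¹ i k) k ω
            * (fun k (ω : Ω) => φ (a ω) (z ω) k * φ (a ω) (z ω) j) k ω := by
      funext ω
      simp [Matrix.mulVec, dotProduct, Finset.sum_mul, mul_assoc]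
    rw [heq]
    refine condexp_vanish_aux μ hm _ (fun _ => (1 : Matrix (Fin p) (Fin p) ℝ) i j)
      _ _ (fun k ω => S0 (z ω) k j) (integrable_const _) ?_ (fun k => hfSM i k)
      (fun k => hgint k j) (fun k => hS0 k j) ?_
    · rw [condExp_const hm]
    · filter_upwards [hS0inv] with ω hω
      have hdet : IsUnit (S0 (z ω)).det := (Matrix.isUnit_iff_isUnit_det _).mp hω
      have hinv := Matrix.nonsing_inv_mul (S0 (z ω)) hdet
      calc (1 : Matrix (Fin p) (Fin p) ℝ) i j
          = ((S0 (z ω))⁻¹ * S0 (z ω)) i j := by rw [hinv]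
        _ = ∑ k, (S0 (z ω))⁻¹ i k * S0 (z ω) k j := Matrix.mul_apply
  · -- part (ii)
    intro i
    have heq : (fun ω => φ (a ω) (z ω) i * (y ω - θ0 (z ω) ⬝ᵥ φ (a ω) (z ω)))
        = fun ω => (fun ω : Ω => y ω * φ (a ω) (z ω) i) ω
          - ∑ k, (fun k (ω : Ω) => θ0 (z ω) k) k ω
            * (fun k (ω : Ω) => φ (a ω) (z ω) i * φ (a ω) (z ω) k) k ω := by
      funext ω
      simp only [dotProduct, mul_sub, Finset.mul_sum]
      rw [mul_comm (φ (a ω) (z ω) i) (y ω)]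
      exact congrArg _ (Finset.sum_congr rfl fun k _ => mul_left_comm _ _ _)
    rw [heq]
    refine condexp_vanish_aux μ hm _ (fun ω => ρ (z ω) i)
      _ _ (fun k ω => S0 (z ω) i k) (hyφ i) (hρ i) (fun k => hθSM k)
      (fun k => hgint i k) (fun k => hS0 i k) ?_
    filter_upwards [hS0inv] with ω hω
    have hdet : IsUnit (S0 (z ω)).det := (Matrix.isUnit_iff_isUnit_det _).mp hω
    have h1 : ∑ k, θ0 (z ω) k * S0 (z ω) i k = (S0 (z ω) *ᵥ θ0 (z ω)) i := by
      simp [Matrix.mulVec, dotProduct, mul_comm]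
    rw [h1, hθ0def, Matrix.mulVec_mulVec, Matrix.mul_nonsing_inv _ hdet,
      Matrix.one_mulVec]
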